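/- Let G be the complete directed graph on n ≥ 2 vertices with source s, let S be a finite sequence of edges of G, and suppose some simple path P from s to a vertex v is not contained in S. Define edge weights by w(e) = 0 for edges e on P and w(e) = 1 for all other edges. Then after processing S by relaxations, the tentative distance d(v) is strictly greater than 0, while the minimum total weight of a simple path from s to v equals 0; hence S does not compute the correct distance to v for this weight function. -/

import Mathlib

/-- Relaxing edge `e = (u, v)`: replace `d v` by `min (d v) (d u + w e)`. -/
noncomputable def relaxStep {α : Type*} [DecidableEq α] (w : α × α → ℝ) (d : α → EReal)
    (e : α × α) : α → EReal :=
  fun v => if v = e.2 then min (d v) (d e.1 + (w e : EReal)) else d v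

/-- Processing a sequence of edges by relaxations, in order. -/
noncomputable def relaxList {α : Type*} [DecidableEq α] (w : α × α → ℝ) (d : α → EReal)
    (S : List (α × α)) : α → EReal :=
  S.foldl (relaxStep w) d

/-- Initial tentative distances: `d s = 0` and `d v = +∞` for `v ≠ s`. -/
noncomputable def initD {α : Type*} [DecidableEq α] (s : α) : α → EReal :=
  fun v => if v = s then 0 else ⊤

lemma zip_tail_snoc {α : Type*} (l : List α) (a b : α) (h : l.getLast? = some a) :
    (l ++ [b]).zip (l ++ [b]).tail = l.zip l.tail ++ [(a, b)] := by
  induction l with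
  | nil => simp at h
  | cons x xs ih =>
    cases xs with
    | nil =>
      simp only [List.getLast?_singleton, Option.some_inj] at h
      subst h
      simp
    | cons y ys =>
      have h' : (y :: ys).getLast? = some a := by
        rwa [List.getLast?_cons_cons] at h
      have := ih h'
      simp only [List.cons_append, List.zip_cons_cons, List.tail_cons] at this ⊢
      rw [this]

lemma mem_zip_tail {α : Type*} {l : List α} {e : α × α} (h : e ∈ l.zip l.tail) :
    ∃ i : ℕ, ∃ h1 : i + 1 < l.length,
      l.get ⟨i, by omega⟩ = e.1 ∧ l.get ⟨i + 1, h1⟩ = e.2 := by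
  obtain ⟨j, hj⟩ := List.mem_iff_get.mp h
  have hjl : (j : ℕ) < l.tail.length := by
    have := j.isLt
    simp only [List.length_zip, lt_min_iff] at this
    exact this.2
  have h1 : (j : ℕ) + 1 < l.length := by
    have := l.length_tail; omega
  refine ⟨j, h1, ?_, ?_⟩
  · simp [← hj, List.getElem_zip]
  · simp [← hj, List.getElem_zip]

lemma prefix_length_eq {α : Type*} {P L : List α} (hP : P.Nodup) (hL : L <+: P)
    (hLne : L ≠ []) {a : α} (hlast : L.getLast? = some a) {i : ℕ} (hi : i < P.length)
    (ha : P.get ⟨i, hi⟩ = a) : L.length = i + 1 := by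
  have h1 : 0 < L.length := List.length_pos_iff.mpr hLne
  have h2 : L.length ≤ P.length := hL.length_le
  have hlast' : L.getLast hLne = a := by
    rw [List.getLast?_eq_getLast hLne, Option.some_inj] at hlast
    exact hlast
  have h3 : L.get ⟨L.length - 1, by omega⟩ = a := by
    rw [List.get_eq_getElem, ← List.getLast_eq_getElem hLne]; exact hlast'
  have h4 : P.get ⟨L.length - 1, by omega⟩ = L.get ⟨L.length - 1, by omega⟩ := by
    obtain ⟨t, ht⟩ := hL
    subst ht
    rw [List.get_eq_getElem, List.get_eq_getElem, List.getElem_append_left (by exact Nat.sub_lt h1 Nat.one_pos)]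
  have h5 : P.get ⟨L.length - 1, by omega⟩ = P.get ⟨i, hi⟩ := by
    rw [h4, h3, ha]
  have := (hP.get_inj_iff.mp h5)
  have : L.length - 1 = i := by
    simpa [Fin.ext_iff] using this
  omega

lemma relax_step_nonneg {α : Type*} [DecidableEq α] {w : α × α → ℝ} (hw0 : ∀ e, 0 ≤ w e)
    (d : α → EReal) (hd : ∀ u, 0 ≤ d u) (e : α × α) : ∀ u, 0 ≤ relaxStep w d e u := by
  intro u
  unfold relaxStep
  split
  · exact le_min (hd u) (add_nonneg (hd e.1) (by exact_mod_cast hw0 e))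
  · exact hd u

lemma relax_cert {α : Type*} [DecidableEq α] (P : List α) (hP : P.Nodup)
    (w : α × α → ℝ) (hw0 : ∀ e, 0 ≤ w e) (hwz : ∀ e, w e ≤ 0 → e ∈ P.zip P.tail) :
    ∀ (S T : List (α × α)) (d : α → EReal),
    (∀ u, 0 ≤ d u) →
    (∀ u, d u ≤ 0 → ∃ L, L <+: P ∧ L ≠ [] ∧ L.getLast? = some u ∧ (L.zip L.tail).Sublist T) →
    ∀ u, relaxList w d S u ≤ 0 →
    ∃ L, L <+: P ∧ L ≠ [] ∧ L.getLast? = some u ∧ (L.zip L.tail).Sublist (T ++ S) := by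
  intro S
  induction S with
  | nil =>
    intro T d _ hc u hu
    simpa using hc u hu
  | cons e S ih =>
    intro T d hd hc u hu
    have hu' : relaxList w (relaxStep w d e) S u ≤ 0 := hu
    have key := ih (T ++ [e]) (relaxStep w d e) (relax_step_nonneg hw0 d hd e) ?_ u hu'
    · simpa [List.append_assoc] using key
    · intro x hx
      unfold relaxStep at hx
      by_cases hxe : x = e.2
      · subst hxe
        rw [if_pos rfl] at hx
        rcases min_le_iff.mp hx with h | h
        · obtain ⟨L, h1, h2, h3, h4⟩ := hc e.2 h
          exact ⟨L, h1, h2, h3, h4.trans (List.sublist_append_left T [e])⟩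
        · -- d e.1 + w e ≤ 0
          have hd1 : d e.1 ≤ 0 := by
            calc d e.1 = d e.1 + 0 := (add_zero _).symm
              _ ≤ d e.1 + (w e : EReal) := by
                  exact add_le_add_right (by exact_mod_cast hw0 e) _
              _ ≤ 0 := h
          have hwe : (w e : EReal) ≤ 0 := by
            calc (w e : EReal) = 0 + (w e : EReal) := (zero_add _).symm
              _ ≤ d e.1 + (w e : EReal) := add_le_add_left (hd e.1) _
              _ ≤ 0 := h
          have hwe' : w e ≤ 0 := by exact_mod_cast hwe
          have hmem : e ∈ P.zip P.tail := hwz e hwe'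
          obtain ⟨i, h1, hg1, hg2⟩ := mem_zip_tail hmem
          obtain ⟨L, hL1, hL2, hL3, hL4⟩ := hc e.1 hd1
          have hlen : L.length = i + 1 := prefix_length_eq hP hL1 hL2 hL3 (by omega) hg1
          have hLtake : L = P.take (i + 1) := by
            rw [List.prefix_iff_eq_take.mp hL1, hlen]
          refine ⟨L ++ [e.2], ?_, by simp, ?_, ?_⟩
          · rw [hLtake, ← hg2]
            have : P.take (i + 1) ++ [P.get ⟨i + 1, h1⟩] = P.take (i + 2) := by
              have := List.take_concat_get h1
              simpa [List.concat_eq_append] using this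
            rw [this]
            exact List.take_prefix _ _
          · exact List.getLast?_concat
          · rw [zip_tail_snoc L e.1 e.2 hL3]
            exact hL4.append (by simp)
      · rw [if_neg hxe] at hx
        obtain ⟨L, h1, h2, h3, h4⟩ := hc x hx
        exact ⟨L, h1, h2, h3, h4.trans (List.sublist_append_left T [e])⟩

theorem stmt_8 {n : ℕ} (hn : 2 ≤ n) (s : Fin n)
    (S : List (Fin n × Fin n)) (hSe : ∀ e ∈ S, e.1 ≠ e.2)
    (P : List (Fin n)) (v : Fin n)
    (hPne : P ≠ []) (hPhead : P.head? = some s) (hPlast : P.getLast? = some v)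
    (hPnodup : P.Nodup)
    (hnc : ¬ (P.zip P.tail).Sublist S)
    (w : Fin n × Fin n → ℝ)
    (hw : ∀ e : Fin n × Fin n, w e = if e ∈ P.zip P.tail then 0 else 1) :
    0 < relaxList w (initD s) S v ∧
    sInf {c : EReal | ∃ p : List (Fin n),
        p ≠ [] ∧ p.head? = some s ∧ p.getLast? = some v ∧ p.Nodup ∧
        c = ((((p.zip p.tail).map w).sum : ℝ) : EReal)} = 0 := by
  have hw0 : ∀ e, 0 ≤ w e := by
    intro e; rw [hw]; split <;> norm_num
  have hwz : ∀ e, w e ≤ 0 → e ∈ P.zip P.tail := by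
    intro e he
    by_contra hne
    rw [hw, if_neg hne] at he
    norm_num at he
  constructor
  · -- part 1
    by_contra hlt
    push_neg at hlt
    have hcert := relax_cert P hPnodup w hw0 hwz S [] (initD s) ?_ ?_ v hlt
    · obtain ⟨L, h1, h2, h3, h4⟩ := hcert
      have hPlen : 0 < P.length := List.length_pos_iff.mpr hPne
      have hvidx : P.get ⟨P.length - 1, by omega⟩ = v := by
        rw [List.get_eq_getElem, ← List.getLast_eq_getElem hPne]
        rw [List.getLast?_eq_getLast hPne, Option.some_inj] at hPlast
        exact hPlast
      have hlen : L.length = (P.length - 1) + 1 := prefix_length_eq hPnodup h1 h2 h3 (by omega) hvidx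
      have hLP : L = P := by
        have : L.length = P.length := by omega
        rw [List.prefix_iff_eq_take.mp h1, this, List.take_length]
      rw [hLP] at h4
      simp only [List.nil_append] at h4
      exact hnc h4
    · intro u; unfold initD; split
      · exact le_refl 0
      · exact le_top
    · intro u hu
      have hus : u = s := by
        unfold initD at hu
        by_contra hne
        rw [if_neg hne] at hu
        exact absurd hu (by simp)
      obtain ⟨t, ht⟩ : ∃ t, P = s :: t := by
        cases P with
        | nil => simp at hPhead
        | cons x xs =>
          have hx : x = s := by simpa using hPhead
          exact ⟨xs, by rw [hx]⟩
      refine ⟨[s], ?_, by simp, by simp [hus], by simp⟩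
      rw [ht]
      exact ⟨t, rfl⟩
  · -- part 2
    apply le_antisymm
    · apply sInf_le
      refine ⟨P, hPne, hPhead, hPlast, hPnodup, ?_⟩
      have hsum : ((P.zip P.tail).map w).sum = 0 := by
        apply List.sum_eq_zero
        intro x hx
        simp only [List.mem_map] at hx
        obtain ⟨e, he, rfl⟩ := hx
        rw [hw, if_pos he]
      rw [hsum]
      simp
    · apply le_sInf
      rintro c ⟨p, -, -, -, -, rfl⟩
      have : (0 : ℝ) ≤ ((p.zip p.tail).map w).sum := by
        apply List.sum_nonneg
        intro x hx
        simp only [List.mem_map] at hx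
        obtain ⟨e, -, rfl⟩ := hx
        exact hw0 e
      exact_mod_cast this
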